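/- The 5×5 real matrix M with rows (4κ,4s,0,0,0), (1,4κ,3s,0,0), (0,2,4κ,2s,0), (0,0,3,4κ,s), (0,0,0,4,4κ) has the property that M + 2κ·Id is singular (admits a nonzero left eigenvector with eigenvalue 0) if and only if either κ = 0, or s ≠ 0 and 9κ² = s, or s ≠ 0 and 9κ² = 4s. For κ real and s ∈ {−1,0,+1}, this occurs exactly when κ = 0, or (s = 1 and κ = ±1/3), or (s = 1 and κ = ±2/3). -/

import Mathlib

/-- The 5×5 matrix appearing in the Wess–Zumino construction (spin-zero case). -/
def M8 (κ s : ℝ) : Matrix (Fin 5) (Fin 5) ℝ :=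
  !![4*κ, 4*s, 0, 0, 0;
     1, 4*κ, 3*s, 0, 0;
     0, 2, 4*κ, 2*s, 0;
     0, 0, 3, 4*κ, s;
     0, 0, 0, 4, 4*κ]

set_option maxHeartbeats 1000000 in
lemma det8 (κ s : ℝ) :
    (M8 κ s + (2*κ) • 1).det = 96*κ*(9*κ^2 - s)*(9*κ^2 - 4*s) := by
  have hA : M8 κ s + (2*κ) • 1 =
      !![6*κ, 4*s, 0, 0, 0;
         1, 6*κ, 3*s, 0, 0;
         0, 2, 6*κ, 2*s, 0;
         0, 0, 3, 6*κ, s;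
         0, 0, 0, 4, 6*κ] := by
    ext i j
    fin_cases i <;> fin_cases j <;>
      simp [M8, Matrix.one_apply] <;> ring
  rw [hA]
  rw [Matrix.det_succ_row_zero]
  simp [Fin.sum_univ_succ, Matrix.det_succ_row_zero (n := 3), Matrix.det_fin_three, Fin.succAbove]
  ring

lemma key8 (κ s : ℝ) :
    (∃ c : Fin 5 → ℝ, c ≠ 0 ∧ Matrix.vecMul c (M8 κ s + (2*κ) • 1) = 0) ↔
      96*κ*(9*κ^2 - s)*(9*κ^2 - 4*s) = 0 := by
  rw [← det8]
  constructor
  · rintro ⟨c, hc, h⟩; exact Matrix.exists_vecMul_eq_zero_iff.mp ⟨c, hc, h⟩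
  · intro h; obtain ⟨v, hv, hv2⟩ := Matrix.exists_vecMul_eq_zero_iff.mpr h
    exact ⟨v, hv, hv2⟩

theorem stmt8 (κ s : ℝ) :
    ((∃ c : Fin 5 → ℝ, c ≠ 0 ∧ Matrix.vecMul c (M8 κ s + (2*κ) • 1) = 0) ↔
      (κ = 0 ∨ (s ≠ 0 ∧ 9*κ^2 = s) ∨ (s ≠ 0 ∧ 9*κ^2 = 4*s))) ∧
    ((s = -1 ∨ s = 0 ∨ s = 1) →
      ((∃ c : Fin 5 → ℝ, c ≠ 0 ∧ Matrix.vecMul c (M8 κ s + (2*κ) • 1) = 0) ↔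
        (κ = 0 ∨ (s = 1 ∧ (κ = 1/3 ∨ κ = -(1/3))) ∨ (s = 1 ∧ (κ = 2/3 ∨ κ = -(2/3)))))) := by
  have h1 : (∃ c : Fin 5 → ℝ, c ≠ 0 ∧ Matrix.vecMul c (M8 κ s + (2*κ) • 1) = 0) ↔
      (κ = 0 ∨ (s ≠ 0 ∧ 9*κ^2 = s) ∨ (s ≠ 0 ∧ 9*κ^2 = 4*s)) := by
    rw [key8]
    constructor
    · intro h
      rcases mul_eq_zero.mp h with h | h4
      · rcases mul_eq_zero.mp h with h | h1
        · left
          have : κ = 0 := by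
            rcases mul_eq_zero.mp h with h96 | hk
            · exact absurd h96 (by norm_num)
            · exact hk
          exact this
        · rcases eq_or_ne s 0 with hs | hs
          · left; nlinarith [sq_nonneg κ]
          · right; left; exact ⟨hs, by linarith⟩
      · rcases eq_or_ne s 0 with hs | hs
        · left; nlinarith [sq_nonneg κ]
        · right; right; exact ⟨hs, by linarith⟩
    · rintro (h | ⟨_, h⟩ | ⟨_, h⟩) <;> rw [h] <;> ring_nf <;> nlinarith [sq_nonneg κ]
  refine ⟨h1, fun hs => ?_⟩
  rw [h1]
  rcases hs with hs | hs | hs <;> subst hs <;> constructor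
  · rintro (h | ⟨_, h⟩ | ⟨_, h⟩)
    · exact Or.inl h
    · nlinarith [sq_nonneg κ]
    · nlinarith [sq_nonneg κ]
  · rintro (h | ⟨h, _⟩ | ⟨h, _⟩) <;> first | exact Or.inl h | norm_num at h
  · rintro (h | ⟨h, _⟩ | ⟨h, _⟩) <;> first | exact Or.inl h | exact absurd rfl h
  · rintro (h | ⟨h, _⟩ | ⟨h, _⟩) <;> first | exact Or.inl h | norm_num at h
  · rintro (h | ⟨_, h⟩ | ⟨_, h⟩)
    · exact Or.inl h
    · right; left
      refine ⟨rfl, ?_⟩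
      have : (3*κ - 1) * (3*κ + 1) = 0 := by nlinarith
      rcases mul_eq_zero.mp this with h' | h'
      · left; linarith
      · right; linarith
    · right; right
      refine ⟨rfl, ?_⟩
      have : (3*κ - 2) * (3*κ + 2) = 0 := by nlinarith
      rcases mul_eq_zero.mp this with h' | h'
      · left; linarith
      · right; linarith
  · rintro (h | ⟨_, h | h⟩ | ⟨_, h | h⟩)
    · exact Or.inl h
    all_goals subst h
    · right; left; norm_num
    · right; left; norm_num
    · right; right; norm_num
    · right; right; norm_num
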